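/- Let γ > 0, let Q : H →L[ℝ] H be self-adjoint, positive, and possess a continuous linear inverse Q⁻¹, let Z : H →L[ℝ] U, and set K := Z ∘ Q⁻¹. Assume (a) A ∘ Q ∘ T* + B₂ ∘ Z ∘ T* + T ∘ Q ∘ A* + T ∘ Z* ∘ B₂* ⪯ 0; (b) B ∘ B* ⪯ γ² • (T ∘ Q ∘ T*); (c) for all u ∈ F and y ∈ H, ‖u‖² + 2·⟪u, C (Q y) + D (Z y)⟫ + ⟪y, Q y⟫ ≥ 0 (positivity of the block [I, CQ+DZ; (CQ+DZ)*, Q]). Then the closed-loop operators A_cl := A + B₂ ∘ K and C_cl := C + D ∘ K satisfy the dual coercive certificate conditions: A_cl ∘ Q ∘ T* + T ∘ Q ∘ A_cl* ⪯ 0, C_cl ∘ Q ∘ C_cl* ⪯ id_F, and B ∘ B* ⪯ γ² • (T ∘ Q ∘ T*). (Algebraic core of Corollary 1(i): the synthesis LPI conditions imply the Theorem 2(ii) conditions for the closed-loop system with gain K = Z Q⁻¹.) -/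

import Mathlib

open ContinuousLinearMap
open scoped RealInnerProductSpace

/-- Algebraic core of Corollary 1(i): the synthesis LPI conditions imply the
Theorem 2(ii) conditions for the closed-loop system with gain `K = Z Q⁻¹`. -/
theorem stmt_14
    {H E F U : Type*}
    [NormedAddCommGroup H] [InnerProductSpace ℝ H] [CompleteSpace H]
    [NormedAddCommGroup E] [InnerProductSpace ℝ E] [FiniteDimensional ℝ E]
    [NormedAddCommGroup F] [InnerProductSpace ℝ F] [FiniteDimensional ℝ F]
    [NormedAddCommGroup U] [InnerProductSpace ℝ U] [FiniteDimensional ℝ U]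
    (T A : H →L[ℝ] H) (B : E →L[ℝ] H) (B₂ : U →L[ℝ] H)
    (C : H →L[ℝ] F) (D : U →L[ℝ] F)
    (γ : ℝ) (hγ : 0 < γ)
    (Q : H →L[ℝ] H) (hQsa : IsSelfAdjoint Q) (hQpos : Q.IsPositive)
    (Qinv : H →L[ℝ] H)
    (hQinv₁ : Q ∘L Qinv = ContinuousLinearMap.id ℝ H)
    (hQinv₂ : Qinv ∘L Q = ContinuousLinearMap.id ℝ H)
    (Z : H →L[ℝ] U)
    (ha : ((0 : H →L[ℝ] H) -
      (A ∘L Q ∘L adjoint T + B₂ ∘L Z ∘L adjoint T +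
        T ∘L Q ∘L adjoint A + T ∘L adjoint Z ∘L adjoint B₂)).IsPositive)
    (hb : ((γ ^ 2) • (T ∘L Q ∘L adjoint T) - B ∘L adjoint B).IsPositive)
    (hc : ∀ (u : F) (y : H),
      ‖u‖ ^ 2 + 2 * ⟪u, C (Q y) + D (Z y)⟫ + ⟪y, Q y⟫ ≥ 0) :
    ((0 : H →L[ℝ] H) -
      ((A + B₂ ∘L (Z ∘L Qinv)) ∘L Q ∘L adjoint T +
        T ∘L Q ∘L adjoint (A + B₂ ∘L (Z ∘L Qinv)))).IsPositive ∧
    (ContinuousLinearMap.id ℝ F -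
      (C + D ∘L (Z ∘L Qinv)) ∘L Q ∘L adjoint (C + D ∘L (Z ∘L Qinv))).IsPositive ∧
    ((γ ^ 2) • (T ∘L Q ∘L adjoint T) - B ∘L adjoint B).IsPositive := by
  have hpt₁ : ∀ x : H, Q (Qinv x) = x := fun x =>
    congrArg (fun f : H →L[ℝ] H => f x) hQinv₁
  have hpt₂ : ∀ x : H, Qinv (Q x) = x := fun x =>
    congrArg (fun f : H →L[ℝ] H => f x) hQinv₂
  have hQadj : adjoint Q = Q := hQsa.adjoint_eq
  have h3 : Q ∘L adjoint Qinv = ContinuousLinearMap.id ℝ H := by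
    have := congrArg adjoint hQinv₂
    simpa [adjoint_comp, hQadj, adjoint_id] using this
  have hpt₃ : ∀ x : H, Q (adjoint Qinv x) = x := fun x =>
    congrArg (fun f : H →L[ℝ] H => f x) h3
  refine ⟨?_, ?_, hb⟩
  · have key : (A + B₂ ∘L (Z ∘L Qinv)) ∘L Q ∘L adjoint T +
        T ∘L Q ∘L adjoint (A + B₂ ∘L (Z ∘L Qinv)) =
        A ∘L Q ∘L adjoint T + B₂ ∘L Z ∘L adjoint T +
        T ∘L Q ∘L adjoint A + T ∘L adjoint Z ∘L adjoint B₂ := by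
      ext x
      simp [adjoint_comp, hpt₁, hpt₂, hpt₃, map_add, hQadj]
      abel
    rw [key]
    exact ha
  · set Ccl := C + D ∘L (Z ∘L Qinv) with hCcl
    constructor
    · have hsa : adjoint (Ccl ∘L Q ∘L adjoint Ccl) = Ccl ∘L Q ∘L adjoint Ccl := by
        ext x
        simp [adjoint_comp, hQadj]
      have : IsSelfAdjoint (Ccl ∘L Q ∘L adjoint Ccl) :=
        ContinuousLinearMap.isSelfAdjoint_iff'.mpr hsa
      exact ContinuousLinearMap.isSelfAdjoint_iff_isSymmetric.mp
        ((ContinuousLinearMap.isSelfAdjoint_iff'.mpr adjoint_id).sub this)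
    · intro u
      have h := hc u (-(adjoint Ccl u))
      have hM : ∀ y : H, C (Q y) + D (Z y) = Ccl (Q y) := by
        intro y; simp [hCcl, hpt₂]
      rw [hM] at h
      have hadj : ⟪adjoint Ccl u, Q (adjoint Ccl u)⟫ = ⟪u, Ccl (Q (adjoint Ccl u))⟫ := by
        rw [← ContinuousLinearMap.adjoint_inner_left Ccl]
      simp only [map_neg, inner_neg_left, inner_neg_right, neg_neg] at h
      rw [hadj] at h
      have hnorm : ‖u‖ ^ 2 = ⟪u, u⟫ := (real_inner_self_eq_norm_sq u).symm
      rw [hnorm] at h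
      have hmain : 0 ≤ ⟪u, u⟫ - ⟪u, Ccl (Q (adjoint Ccl u))⟫ := by linarith
      simpa [reApplyInnerSelf, inner_sub_left, inner_sub_right,
        real_inner_comm u] using hmain
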